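/- Let ϱ ∈ (0,1), σ > 0, α ≥ 1, t > 0, and c_n ∈ ℂ with |c_n| ≤ (eσϱ/n)^{n/ϱ} for all n ≥ 1. Then the series ∑_{n=1}^∞ |c_n| · t^{−n} · n! converges. -/

import Mathlib

open Real

theorem stmt7 (ϱ σ α t : ℝ) (hϱ : ϱ ∈ Set.Ioo 0 1) (hσ : 0 < σ)
    (hα : 1 ≤ α) (ht : 0 < t) (c : ℕ → ℂ)
    (hc : ∀ n : ℕ, 1 ≤ n →
      ‖c n‖ ≤ (Real.exp 1 * σ * ϱ / n) ^ ((n : ℝ) / ϱ)) :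
    Summable (fun n : ℕ =>
      ‖c (n + 1)‖ * t ^ (-((n : ℝ) + 1)) * (Nat.factorial (n + 1))) := by
  obtain ⟨hϱ0, hϱ1⟩ := hϱ
  set K := Real.exp 1 * σ * ϱ with hKdef
  have he : (0:ℝ) < Real.exp 1 := Real.exp_pos 1
  have hK0 : 0 < K := by positivity
  have hinv : 1 < 1/ϱ := one_lt_one_div hϱ0 hϱ1
  have htend : Filter.Tendsto (fun n : ℕ => K^(1/ϱ) * ((n:ℝ)+1)^(1-1/ϱ) / t)
      Filter.atTop (nhds 0) := by
    have h1 : Filter.Tendsto (fun n : ℕ => ((n:ℝ)+1)) Filter.atTop Filter.atTop :=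
      Filter.tendsto_atTop_add_const_right _ 1 tendsto_natCast_atTop_atTop
    have h2 := (tendsto_rpow_neg_atTop (by linarith : 0 < 1/ϱ - 1)).comp h1
    have h3 : Filter.Tendsto (fun n : ℕ => ((n:ℝ)+1)^(1-1/ϱ)) Filter.atTop (nhds 0) := by
      have heq : (fun n : ℕ => ((n:ℝ)+1)^(1-1/ϱ))
          = (fun x : ℝ => x ^ (-(1/ϱ-1))) ∘ fun n : ℕ => ((n:ℝ)+1) := by
        funext k; simp only [Function.comp]; ring_nf
      rw [heq]; exact h2
    have h4 := (h3.const_mul (K^(1/ϱ))).div_const t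
    simpa using h4
  have hev : ∀ᶠ n : ℕ in Filter.atTop, K^(1/ϱ) * ((n:ℝ)+1)^(1-1/ϱ) / t ≤ 1/2 :=
    (htend.eventually (gt_mem_nhds (by norm_num : (0:ℝ) < 1/2))).mono fun n hn => le_of_lt hn
  have hgeo : Summable (fun n : ℕ => (1/2:ℝ)^n) :=
    summable_geometric_of_lt_one (by norm_num) (by norm_num)
  apply Summable.of_norm_bounded_eventually_nat hgeo
  filter_upwards [hev] with n hn
  set A : ℝ := (n:ℝ)+1 with hA
  have hA0 : (0:ℝ) < A := by positivity
  have hnn : (0:ℝ) ≤ ‖c (n+1)‖ * t ^ (-((n:ℝ)+1)) * (Nat.factorial (n+1)) := by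
    have := norm_nonneg (c (n+1))
    positivity
  rw [Real.norm_eq_abs, abs_of_nonneg hnn]
  have hcb : ‖c (n+1)‖ ≤ (K/A)^(A/ϱ) := by
    have := hc (n+1) (by omega)
    push_cast at this
    exact this
  -- rewrite pieces as natural powers
  have e1 : (K/A)^(A/ϱ) = ((K/A)^(1/ϱ))^(n+1) := by
    rw [← Real.rpow_natCast ((K/A)^(1/ϱ)) (n+1), ← Real.rpow_mul (by positivity)]
    push_cast
    ring_nf
    congr 1; rw [hA]; ring
  have e2 : t ^ (-((n:ℝ)+1)) = (t⁻¹)^(n+1) := by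
    rw [← Real.rpow_natCast (t⁻¹) (n+1), ← Real.rpow_neg_one t, ← Real.rpow_mul ht.le]
    push_cast
    ring_nf
  have e3 : ((Nat.factorial (n+1)) : ℝ) ≤ A^(n+1) := by
    have h := Nat.factorial_le_pow (n+1)
    calc ((Nat.factorial (n+1)) : ℝ) ≤ ((n+1:ℕ)^(n+1) : ℕ) := by exact_mod_cast h
      _ = A^(n+1) := by push_cast [hA]; ring
  have hx0 : (0:ℝ) ≤ (K/A)^(1/ϱ) * t⁻¹ := by positivity
  have key : ‖c (n+1)‖ * t ^ (-((n:ℝ)+1)) * (Nat.factorial (n+1))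
      ≤ ((K/A)^(1/ϱ) * t⁻¹ * A)^(n+1) := by
    rw [mul_pow, mul_pow, ← e1, ← e2]
    have h1 : ‖c (n+1)‖ * t ^ (-((n:ℝ)+1)) ≤ (K/A)^(A/ϱ) * t ^ (-((n:ℝ)+1)) := by
      gcongr
    calc ‖c (n+1)‖ * t ^ (-((n:ℝ)+1)) * (Nat.factorial (n+1))
        ≤ (K/A)^(A/ϱ) * t ^ (-((n:ℝ)+1)) * A^(n+1) := by
          exact mul_le_mul h1 e3 (by positivity) (by positivity)
      _ = (K/A)^(A/ϱ) * t ^ (-((n:ℝ)+1)) * A^(n+1) := rfl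
  have hxeq : (K/A)^(1/ϱ) * t⁻¹ * A = K^(1/ϱ) * A^(1-1/ϱ) / t := by
    rw [Real.div_rpow hK0.le hA0.le, Real.rpow_sub hA0, Real.rpow_one]
    field_simp
  calc ‖c (n+1)‖ * t ^ (-((n:ℝ)+1)) * (Nat.factorial (n+1))
      ≤ ((K/A)^(1/ϱ) * t⁻¹ * A)^(n+1) := key
    _ = (K^(1/ϱ) * A^(1-1/ϱ) / t)^(n+1) := by rw [hxeq]
    _ ≤ (1/2:ℝ)^(n+1) := by
        apply pow_le_pow_left₀ (by positivity) hn
    _ ≤ (1/2:ℝ)^n := by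
        apply pow_le_pow_of_le_one (by norm_num) (by norm_num)
        omega
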